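/- Vanishing of commutators of critically scaled local observables (strictly localized case): let H be a complex Hilbert space, n ≥ 1, and let A, B : ℝⁿ → B(H) be operator-norm continuous maps into the bounded operators on H with sup_x ‖A(x)‖ ≤ M and sup_x ‖B(x)‖ ≤ M. Let f : ℝⁿ → ℝ be continuous with compact support, and let γ_A, γ_B be real numbers with γ_A + γ_B > n. Suppose there is a compact set S ⊆ ℝⁿ such that A(x) B(y) = B(y) A(x) whenever x − y ∉ S. Define, for R > 0, the Bochner integrals A_R = R^{−γ_A} ∫_{ℝⁿ} f(x/R) A(x) dx and B_R = R^{−γ_B} ∫_{ℝⁿ} f(x/R) B(x) dx. Then ‖A_R B_R − B_R A_R‖ → 0 as R → ∞. -/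

import Mathlib

open MeasureTheory Complex Filter Real Topology
open Pointwise

set_option synthInstance.maxHeartbeats 1000000
set_option maxHeartbeats 1000000

/-- Vanishing of commutators of critically scaled, strictly localized observables: if
`[A(x), B(y)] = 0` whenever `x − y` lies outside a compact set and `γ_A + γ_B > n`, then the
commutator of the block observables `A_R = R^{−γ_A} ∫ f(x/R) A(x) dx` and
`B_R = R^{−γ_B} ∫ f(x/R) B(x) dx` vanishes in operator norm as `R → ∞`. -/
theorem commutator_vanishes_strictly_localized {n : ℕ} (hn : 1 ≤ n)
    {H : Type*} [NormedAddCommGroup H] [InnerProductSpace ℂ H] [CompleteSpace H]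
    (A B : EuclideanSpace ℝ (Fin n) → (H →L[ℂ] H))
    (hA : Continuous A) (hB : Continuous B)
    (M : ℝ) (hAbd : ∀ x, ‖A x‖ ≤ M) (hBbd : ∀ x, ‖B x‖ ≤ M)
    (f : EuclideanSpace ℝ (Fin n) → ℝ) (hf : Continuous f) (hfc : HasCompactSupport f)
    (γA γB : ℝ) (hγ : (n : ℝ) < γA + γB)
    (S : Set (EuclideanSpace ℝ (Fin n))) (hS : IsCompact S)
    (hcomm : ∀ x y : EuclideanSpace ℝ (Fin n), x - y ∉ S → A x * B y = B y * A x) :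
    Tendsto (fun R : ℝ =>
        ‖(R ^ (-γA) • ∫ x : EuclideanSpace ℝ (Fin n), f (R⁻¹ • x) • A x) *
            (R ^ (-γB) • ∫ x : EuclideanSpace ℝ (Fin n), f (R⁻¹ • x) • B x) -
          (R ^ (-γB) • ∫ x : EuclideanSpace ℝ (Fin n), f (R⁻¹ • x) • B x) *
            (R ^ (-γA) • ∫ x : EuclideanSpace ℝ (Fin n), f (R⁻¹ • x) • A x)‖)
      atTop (𝓝 0) := by
  obtain ⟨z₀, hCf⟩ := (hf.norm).exists_forall_ge_of_hasCompactSupport hfc.norm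
  set Cf : ℝ := ‖f z₀‖ with hCfdef
  have hCf0 : 0 ≤ Cf := norm_nonneg _
  have hM0 : 0 ≤ M := le_trans (norm_nonneg _) (hAbd 0)
  set μS : ℝ := (volume S).toReal with hμSdef
  set μK : ℝ := (volume (tsupport f)).toReal with hμKdef
  have hμS0 : 0 ≤ μS := ENNReal.toReal_nonneg
  have hμK0 : 0 ≤ μK := ENNReal.toReal_nonneg
  set C : ℝ := 2 * Cf ^ 2 * M ^ 2 * μS * μK with hCdef
  have hC0 : 0 ≤ C := by positivity
  have key : ∀ R : ℝ, 0 < R →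
      ‖(R ^ (-γA) • ∫ x : EuclideanSpace ℝ (Fin n), f (R⁻¹ • x) • A x) *
            (R ^ (-γB) • ∫ x : EuclideanSpace ℝ (Fin n), f (R⁻¹ • x) • B x) -
          (R ^ (-γB) • ∫ x : EuclideanSpace ℝ (Fin n), f (R⁻¹ • x) • B x) *
            (R ^ (-γA) • ∫ x : EuclideanSpace ℝ (Fin n), f (R⁻¹ • x) • A x)‖
        ≤ C * R ^ ((n : ℝ) - (γA + γB)) := by
    intro R hR
    set φ : EuclideanSpace ℝ (Fin n) → ℝ := fun x => f (R⁻¹ • x) with hφdef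
    have hφc : Continuous φ := hf.comp (continuous_const_smul _)
    have hφsupp : HasCompactSupport φ := hfc.comp_smul (inv_ne_zero hR.ne')
    set u : EuclideanSpace ℝ (Fin n) → (H →L[ℂ] H) := fun x => φ x • A x with hudef
    set v : EuclideanSpace ℝ (Fin n) → (H →L[ℂ] H) := fun x => φ x • B x with hvdef
    have hucont : Continuous u := hφc.smul hA
    have hvcont : Continuous v := hφc.smul hB
    have huint : Integrable u := hucont.integrable_of_hasCompactSupport hφsupp.smul_right
    have hvint : Integrable v := hvcont.integrable_of_hasCompactSupport hφsupp.smul_right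
    have hKc : IsCompact (R • tsupport f) := hfc.smul R
    have hKm : volume (R • tsupport f) = ENNReal.ofReal (R ^ n) * volume (tsupport f) := by
      rw [Measure.addHaar_smul_of_nonneg volume hR.le, finrank_euclideanSpace,
        Fintype.card_fin]
    have huK : ∀ x, x ∉ R • tsupport f → u x = 0 := by
      intro x hx
      have : φ x = 0 := by
        by_contra h
        exact hx ⟨R⁻¹ • x, subset_tsupport f h, by simp [smul_smul, mul_inv_cancel₀ hR.ne']⟩
      simp [hudef, this]
    set X : H →L[ℂ] H := ∫ x, u x with hXdef
    set Y : H →L[ℂ] H := ∫ x, v x with hYdef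
    -- commutator formula
    have hcform : ∀ x y, u x * v y - v y * u x
        = (φ x * φ y) • (A x * B y - B y * A x) := by
      intro x y
      rw [hudef, hvdef]
      simp only [smul_mul_assoc, mul_smul_comm, smul_smul, smul_sub]
      rw [mul_comm (φ y) (φ x)]
    -- pointwise bound on the commutator
    have hcbd : ∀ x y, ‖u x * v y - v y * u x‖
        ≤ Set.indicator ((fun y => x - y) ⁻¹' S) (fun _ => 2 * Cf ^ 2 * M ^ 2) y := by
      intro x y
      by_cases hxy : x - y ∈ S
      · rw [Set.indicator_of_mem (show y ∈ (fun y => x - y) ⁻¹' S from hxy), hcform]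
        calc ‖(φ x * φ y) • (A x * B y - B y * A x)‖
            = |φ x| * |φ y| * ‖A x * B y - B y * A x‖ := by
              rw [norm_smul, Real.norm_eq_abs, abs_mul]
          _ ≤ Cf * Cf * (M * M + M * M) := by
              have h1 : ‖A x * B y - B y * A x‖ ≤ M * M + M * M := by
                refine le_trans (norm_sub_le _ _) ?_
                have e1 : ‖A x * B y‖ ≤ M * M := le_trans (norm_mul_le _ _)
                  (mul_le_mul (hAbd x) (hBbd y) (norm_nonneg _) hM0)
                have e2 : ‖B y * A x‖ ≤ M * M := le_trans (norm_mul_le _ _)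
                  (mul_le_mul (hBbd y) (hAbd x) (norm_nonneg _) hM0)
                linarith
              have hax : |φ x| ≤ Cf := by
                simpa [Real.norm_eq_abs] using hCf (R⁻¹ • x)
              have hay : |φ y| ≤ Cf := by
                simpa [Real.norm_eq_abs] using hCf (R⁻¹ • y)
              exact mul_le_mul (mul_le_mul hax hay (abs_nonneg _) hCf0) h1
                (norm_nonneg _) (by positivity)
          _ = 2 * Cf ^ 2 * M ^ 2 := by ring
      · rw [Set.indicator_of_notMem (show y ∉ (fun y => x - y) ⁻¹' S from hxy), hcform,
          hcomm x y hxy, sub_self, smul_zero, norm_zero]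
    -- integrability of CLM compositions
    have hint_uY : Integrable (fun x => u x * Y) :=
      (((ContinuousLinearMap.mul ℂ (H →L[ℂ] H)).flip Y).integrable_comp huint)
    have hint_Yu : Integrable (fun x => Y * u x) :=
      ((ContinuousLinearMap.mul ℂ (H →L[ℂ] H) Y).integrable_comp huint)
    -- outer splitting
    have houter : X * Y - Y * X = ∫ x, (u x * Y - Y * u x) := by
      have h1 : ∫ x, u x * Y = X * Y :=
        ContinuousLinearMap.integral_comp_comm
          ((ContinuousLinearMap.mul ℂ (H →L[ℂ] H)).flip Y) huint
      have h2 : ∫ x, Y * u x = Y * X :=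
        ContinuousLinearMap.integral_comp_comm
          (ContinuousLinearMap.mul ℂ (H →L[ℂ] H) Y) huint
      rw [← h1, ← h2]
      exact (integral_sub hint_uY hint_Yu).symm
    -- inner splitting
    have hinner : ∀ x, u x * Y - Y * u x = ∫ y, (u x * v y - v y * u x) := by
      intro x
      have h1 : ∫ y, u x * v y = u x * Y :=
        ContinuousLinearMap.integral_comp_comm
          (ContinuousLinearMap.mul ℂ (H →L[ℂ] H) (u x)) hvint
      have h2 : ∫ y, v y * u x = Y * u x :=
        ContinuousLinearMap.integral_comp_comm
          ((ContinuousLinearMap.mul ℂ (H →L[ℂ] H)).flip (u x)) hvint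
      have hi1 : Integrable (fun y => u x * v y) :=
        (ContinuousLinearMap.mul ℂ (H →L[ℂ] H) (u x)).integrable_comp hvint
      have hi2 : Integrable (fun y => v y * u x) :=
        ((ContinuousLinearMap.mul ℂ (H →L[ℂ] H)).flip (u x)).integrable_comp hvint
      rw [← h1, ← h2]
      exact (integral_sub hi1 hi2).symm
    -- measure of the translated set
    have hTm : ∀ x : EuclideanSpace ℝ (Fin n),
        volume ((fun y => x - y) ⁻¹' S) = volume S := by
      intro x
      exact (Measure.measurePreserving_sub_left volume x).measure_preimage
        hS.measurableSet.nullMeasurableSet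
    have hTmeas : ∀ x : EuclideanSpace ℝ (Fin n),
        MeasurableSet ((fun y => x - y) ⁻¹' S) := fun x =>
      hS.measurableSet.preimage (measurable_const.sub measurable_id)
    -- inner bound
    have hinnerbd : ∀ x, ‖u x * Y - Y * u x‖
        ≤ Set.indicator (R • tsupport f) (fun _ => 2 * Cf ^ 2 * M ^ 2 * μS) x := by
      intro x
      by_cases hx : x ∈ R • tsupport f
      · rw [Set.indicator_of_mem hx, hinner]
        have hgint : Integrable
            (Set.indicator ((fun y => x - y) ⁻¹' S) (fun _ => 2 * Cf ^ 2 * M ^ 2)) := by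
          rw [integrable_indicator_iff (hTmeas x)]
          exact integrableOn_const (by rw [hTm x]; exact hS.measure_lt_top.ne)
        refine le_trans (norm_integral_le_of_norm_le hgint
          (Filter.Eventually.of_forall (hcbd x))) ?_
        rw [integral_indicator_const _ (hTmeas x), measureReal_def, hTm x, smul_eq_mul, hμSdef]
        ring_nf
        exact le_refl _
      · rw [Set.indicator_of_notMem hx, huK x hx]
        simp
    -- outer bound
    have houterbd : ‖X * Y - Y * X‖ ≤ 2 * Cf ^ 2 * M ^ 2 * μS * (R ^ n * μK) := by
      rw [houter]
      have hgint : Integrable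
          (Set.indicator (R • tsupport f) (fun _ => 2 * Cf ^ 2 * M ^ 2 * μS)) := by
        rw [integrable_indicator_iff hKc.measurableSet]
        exact integrableOn_const hKc.measure_lt_top.ne
      refine le_trans (norm_integral_le_of_norm_le hgint
        (Filter.Eventually.of_forall hinnerbd)) ?_
      rw [integral_indicator_const _ hKc.measurableSet, measureReal_def, hKm, smul_eq_mul,
        ENNReal.toReal_mul, ENNReal.toReal_ofReal (by positivity)]
      rw [hμKdef]
      ring_nf
      exact le_refl _
    -- assemble
    have hgoal : (R ^ (-γA) • X) * (R ^ (-γB) • Y) - (R ^ (-γB) • Y) * (R ^ (-γA) • X)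
        = (R ^ (-γA) * R ^ (-γB)) • (X * Y - Y * X) := by
      rw [smul_mul_assoc, smul_mul_assoc, mul_smul_comm, mul_smul_comm, smul_smul, smul_smul,
        mul_comm (R ^ (-γB)) (R ^ (-γA)), smul_sub]
    rw [hgoal, norm_smul, Real.norm_eq_abs, _root_.abs_of_nonneg (by positivity)]
    calc R ^ (-γA) * R ^ (-γB) * ‖X * Y - Y * X‖
        ≤ R ^ (-γA) * R ^ (-γB) * (2 * Cf ^ 2 * M ^ 2 * μS * (R ^ n * μK)) := by
          gcongr
      _ = C * (R ^ (-γA) * R ^ (-γB) * R ^ (n : ℝ)) := by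
          rw [← Real.rpow_natCast R n]; ring
      _ = C * R ^ ((n : ℝ) - (γA + γB)) := by
          rw [← Real.rpow_add hR, ← Real.rpow_add hR]
          ring_nf
  have hlim : Tendsto (fun R : ℝ => C * R ^ ((n : ℝ) - (γA + γB))) atTop (𝓝 0) := by
    have h1 := tendsto_rpow_neg_atTop (y := (γA + γB) - (n : ℝ)) (by linarith)
    rw [show -((γA + γB) - (n : ℝ)) = (n : ℝ) - (γA + γB) by ring] at h1
    simpa using h1.const_mul C
  refine squeeze_zero' (Filter.Eventually.of_forall fun R => norm_nonneg _)
    ((eventually_gt_atTop 0).mono key) hlim
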